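/- Let W be a nonnegative weight function on a domain Ω ⊂ ℝ² with finite moments of all orders and positive-definite moment functional (∫_Ω p² W > 0 for every nonzero polynomial p), and let n ≥ 1. Let {P_{k,n} : 0 ≤ k ≤ n} be a basis of 𝒱_n², the (n+1)-dimensional space of orthogonal polynomials of degree n with respect to W. Then there exist N = n(n+1)/2 = dim Π²_{n−1} points (x_k,y_k) ∈ ℝ² and weights λ_k such that ∫_Ω f W = Σ_{k=1}^N λ_k f(x_k,y_k) for all f ∈ Π²_{2n−1} (a Gaussian cubature rule of degree 2n−1) if and only if the polynomials P_{0,n},…,P_{n,n} have n(n+1)/2 common zeros in ℝ², and in that case the nodes of the cubature rule are exactly these common zeros. -/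

import Mathlib

set_option synthInstance.maxHeartbeats 1000000
set_option maxHeartbeats 1000000

open MeasureTheory MvPolynomial

noncomputable section AuxGC

/-- evaluation at a point of the plane -/
def evp (z : ℝ × ℝ) (f : MvPolynomial (Fin 2) ℝ) : ℝ := MvPolynomial.eval ![z.1, z.2] f

lemma evp_add (z : ℝ × ℝ) (f g : MvPolynomial (Fin 2) ℝ) : evp z (f + g) = evp z f + evp z g := by
  simp [evp]

lemma evp_mul (z : ℝ × ℝ) (f g : MvPolynomial (Fin 2) ℝ) : evp z (f * g) = evp z f * evp z g := by
  simp [evp]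

lemma evp_smul (z : ℝ × ℝ) (c : ℝ) (f : MvPolynomial (Fin 2) ℝ) : evp z (c • f) = c * evp z f := by
  simp [evp, MvPolynomial.smul_eq_C_mul]

lemma evp_sum {ι : Type*} (s : Finset ι) (g : ι → MvPolynomial (Fin 2) ℝ) (z : ℝ × ℝ) :
    evp z (∑ i ∈ s, g i) = ∑ i ∈ s, evp z (g i) := by
  simp [evp]

/-- the space Π_m of polynomials of total degree at most m -/
abbrev Pim (m : ℕ) : Submodule ℝ (MvPolynomial (Fin 2) ℝ) :=
  MvPolynomial.restrictTotalDegree (Fin 2) ℝ m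

lemma mem_Pim {m : ℕ} {f : MvPolynomial (Fin 2) ℝ} : f ∈ Pim m ↔ f.totalDegree ≤ m :=
  MvPolynomial.mem_restrictTotalDegree _ _ _

/-- counting finset for pairs with sum ≤ m -/
def cntF (m : ℕ) : Finset (ℕ × ℕ) :=
  (Finset.range (m+1)).biUnion fun a => (Finset.range (m+1-a)).image fun b => (a, b)

lemma mem_cntF {m : ℕ} {p : ℕ × ℕ} : p ∈ cntF m ↔ p.1 + p.2 ≤ m := by
  rcases p with ⟨a, b⟩
  simp only [cntF, Finset.mem_biUnion, Finset.mem_range, Finset.mem_image, Prod.mk.injEq]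
  constructor
  · rintro ⟨a', ha', b', hb', rfl, rfl⟩; omega
  · intro h; exact ⟨a, by omega, b, by omega, rfl, rfl⟩

lemma cntF_card (m : ℕ) : (cntF m).card = (m+1)*(m+2)/2 := by
  have hdisj : ∀ a ∈ Finset.range (m+1), ∀ b ∈ Finset.range (m+1), a ≠ b →
      Disjoint ((Finset.range (m+1-a)).image fun x => (a, x))
        ((Finset.range (m+1-b)).image fun x => (b, x)) := by
    intro a _ b _ hab
    simp only [Finset.disjoint_left, Finset.mem_image]
    rintro ⟨u, v⟩ ⟨x, _, h1⟩ ⟨y, _, h2⟩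
    apply hab
    have e1 : a = u := congrArg Prod.fst h1
    have e2 : b = u := congrArg Prod.fst h2
    omega
  rw [cntF, Finset.card_biUnion hdisj]
  have himg : ∀ a, ((Finset.range (m+1-a)).image fun x => (a, x)).card = m+1-a := by
    intro a
    rw [Finset.card_image_of_injective _ (fun x y h => congrArg Prod.snd h), Finset.card_range]
  simp only [himg]
  have : ∑ a ∈ Finset.range (m+1), (m+1-a) = ∑ a ∈ Finset.range (m+1), (a+1) := by
    rw [← Finset.sum_range_reflect]
    apply Finset.sum_congr rfl
    intro a ha; simp only [Finset.mem_range] at ha; omega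
  rw [this]
  have h1 := Finset.sum_range_succ' (fun i => i) (m+1)
  have h2 : (∑ a ∈ Finset.range (m+1+1), a) * 2 = (m+1+1)*(m+1+1-1) := Finset.sum_range_id_mul_two (m+1+1)
  have h3 : (m+1+1)*(m+1+1-1) = (m+1)*(m+2) := by simp; ring
  omega


lemma finsuppSum_eq (s : Fin 2 →₀ ℕ) : (s.sum fun _ e => e) = s 0 + s 1 := by
  rw [Finsupp.sum_fintype _ _ (fun _ => rfl), Fin.sum_univ_two]

def cntEquiv (m : ℕ) : {s : Fin 2 →₀ ℕ // (s.sum fun _ e => e) ≤ m} ≃ {p : ℕ × ℕ // p ∈ cntF m} where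
  toFun s := ⟨(s.1 0, s.1 1), mem_cntF.mpr (by rw [← finsuppSum_eq]; exact s.2)⟩
  invFun p := ⟨Finsupp.single 0 p.1.1 + Finsupp.single 1 p.1.2, by
    rw [finsuppSum_eq]
    have := mem_cntF.mp p.2
    simp [Finsupp.single_apply]
    omega⟩
  left_inv s := by
    ext i
    fin_cases i <;> simp [Finsupp.single_apply]
  right_inv p := by
    ext <;> simp [Finsupp.single_apply]

lemma finrank_Pim (m : ℕ) : Module.finrank ℝ (Pim m) = (m+1)*(m+2)/2 := by
  rw [show Pim m = MvPolynomial.restrictSupport ℝ {n : Fin 2 →₀ ℕ | (n.sum fun _ e => e) ≤ m} from rfl]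
  rw [Module.finrank_eq_nat_card_basis (MvPolynomial.basisRestrictSupport ℝ _)]
  have : Nat.card {n : Fin 2 →₀ ℕ | (n.sum fun _ e => e) ≤ m} = Nat.card {p : ℕ × ℕ // p ∈ cntF m} :=
    Nat.card_congr (cntEquiv m)
  rw [this, Nat.card_eq_finsetCard, cntF_card]


lemma arith_split (m : ℕ) : (m+1)*(m+2)/2 = (m+1) + m*(m+1)/2 := by
  obtain ⟨k, hk⟩ := Nat.even_mul_succ_self m
  have h2 : (m+1)*(m+2) = m*(m+1) + 2*(m+1) := by ring
  omega

variable (Om : Set (ℝ × ℝ)) (W : ℝ × ℝ → ℝ)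

/-- the moment functional -/
def intW (f : MvPolynomial (Fin 2) ℝ) : ℝ := ∫ z in Om, evp z f * W z

variable (hW_mom : ∀ f : MvPolynomial (Fin 2) ℝ,
    IntegrableOn (fun z => MvPolynomial.eval ![z.1, z.2] f * W z) Om)

include hW_mom

lemma intW_add (f g : MvPolynomial (Fin 2) ℝ) :
    intW Om W (f + g) = intW Om W f + intW Om W g := by
  unfold intW
  simp only [evp_add, add_mul]
  exact integral_add (hW_mom f) (hW_mom g)

omit hW_mom

lemma intW_smul (c : ℝ) (f : MvPolynomial (Fin 2) ℝ) :
    intW Om W (c • f) = c * intW Om W f := by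
  unfold intW
  simp only [evp_smul, mul_assoc]
  exact MeasureTheory.integral_const_mul c _

lemma intW_zero : intW Om W 0 = 0 := by
  unfold intW
  simp [evp]

include hW_mom

lemma intW_sum {ι : Type*} (s : Finset ι) (g : ι → MvPolynomial (Fin 2) ℝ) :
    intW Om W (∑ i ∈ s, g i) = ∑ i ∈ s, intW Om W (g i) := by
  classical
  induction s using Finset.cons_induction with
  | empty => simpa using intW_zero Om W
  | cons i s hi ih =>
      rw [Finset.sum_cons, Finset.sum_cons, intW_add Om W hW_mom, ih]


variable (hW_pd : ∀ f : MvPolynomial (Fin 2) ℝ, f ≠ 0 →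
    0 < ∫ z in Om, (MvPolynomial.eval ![z.1, z.2] f) ^ 2 * W z)
variable {n : ℕ} {P : Fin (n + 1) → MvPolynomial (Fin 2) ℝ}
variable (hPorth : ∀ k (q : MvPolynomial (Fin 2) ℝ), q.totalDegree < n →
    ∫ z in Om, MvPolynomial.eval ![z.1, z.2] (P k) *
      MvPolynomial.eval ![z.1, z.2] q * W z = 0)

include hW_mom hW_pd hPorth

lemma combo_eq_zero (a : Fin (n + 1) → ℝ) (h : (∑ k, a k • P k).totalDegree < n) :
    ∑ k, a k • P k = 0 := by
  set g := ∑ k, a k • P k with hg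
  by_contra hne
  have hpos := hW_pd g hne
  have e1 : ∫ z in Om, (MvPolynomial.eval ![z.1, z.2] g) ^ 2 * W z = intW Om W (g * g) := by
    unfold intW
    congr 1
    funext z
    simp [evp, sq]
  have e2 : g * g = ∑ k, a k • (P k * g) := by
    rw [hg, Finset.sum_mul]
    exact Finset.sum_congr rfl fun k _ => smul_mul_assoc (a k) (P k) g
  have e3 : intW Om W (g * g) = 0 := by
    rw [e2, intW_sum Om W hW_mom]
    apply Finset.sum_eq_zero
    intro k _
    rw [intW_smul]
    have : intW Om W (P k * g) = 0 := by
      rw [intW, show (fun z => evp z (P k * g) * W z) = fun z =>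
        MvPolynomial.eval ![z.1, z.2] (P k) * MvPolynomial.eval ![z.1, z.2] g * W z from
        funext fun z => by simp [evp]]
      exact hPorth k g h
    rw [this, mul_zero]
  rw [e1, e3] at hpos
  exact lt_irrefl 0 hpos


variable (hPdeg : ∀ k, (P k).totalDegree = n) (hPli : LinearIndependent ℝ P) (hn : 1 ≤ n)

include hW_mom hW_pd hPorth hPdeg hPli hn in
lemma decomp_n (f : MvPolynomial (Fin 2) ℝ) (hf : f.totalDegree ≤ n) :
    ∃ (a : Fin (n + 1) → ℝ) (r : MvPolynomial (Fin 2) ℝ),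
      r.totalDegree ≤ n - 1 ∧ f = (∑ k, a k • P k) + r := by
  classical
  let U : ((Fin (n + 1) → ℝ) × Pim (n - 1)) →ₗ[ℝ] MvPolynomial (Fin 2) ℝ :=
    (Fintype.linearCombination ℝ P).comp (LinearMap.fst ℝ _ _) +
      (Pim (n - 1)).subtype.comp (LinearMap.snd ℝ _ _)
  have hU : ∀ ar : (Fin (n + 1) → ℝ) × Pim (n - 1),
      U ar = (∑ k, ar.1 k • P k) + (ar.2 : MvPolynomial (Fin 2) ℝ) := by
    intro ar
    simp [U, Fintype.linearCombination_apply]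
  have hUmem : ∀ ar, U ar ∈ Pim n := by
    intro ar
    rw [hU, mem_Pim]
    refine le_trans (MvPolynomial.totalDegree_add _ _) (max_le ?_ ?_)
    · refine le_trans (MvPolynomial.totalDegree_finset_sum _ _) ?_
      refine Finset.sup_le fun k _ => ?_
      exact le_trans (MvPolynomial.totalDegree_smul_le _ _) (le_of_eq (hPdeg k))
    · exact le_trans (mem_Pim.mp ar.2.2) (by omega)
  let Phi : ((Fin (n + 1) → ℝ) × Pim (n - 1)) →ₗ[ℝ] Pim n := U.codRestrict (Pim n) hUmem
  have hinj : Function.Injective Phi := by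
    rw [← LinearMap.ker_eq_bot, Submodule.eq_bot_iff]
    rintro ⟨a, r⟩ hmem
    rw [LinearMap.mem_ker] at hmem
    have hval : (∑ k, a k • P k) + (r : MvPolynomial (Fin 2) ℝ) = 0 := by
      have := congrArg Subtype.val hmem
      rwa [LinearMap.codRestrict_apply, hU] at this
    have hdeg : (∑ k, a k • P k).totalDegree < n := by
      have he : ∑ k, a k • P k = -(r : MvPolynomial (Fin 2) ℝ) := by linear_combination hval
      rw [he, MvPolynomial.totalDegree_neg]
      have := mem_Pim.mp r.2
      omega
    have hz := combo_eq_zero Om W hW_mom hW_pd hPorth a hdeg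
    have ha : ∀ k, a k = 0 := Fintype.linearIndependent_iff.mp hPli a hz
    have hr : (r : MvPolynomial (Fin 2) ℝ) = 0 := by rw [hz, zero_add] at hval; exact hval
    exact Prod.ext (funext ha) (Subtype.ext hr)
  have hfr : Module.finrank ℝ ((Fin (n + 1) → ℝ) × Pim (n - 1)) = Module.finrank ℝ (Pim n) := by
    rw [Module.finrank_prod, Module.finrank_pi, finrank_Pim, finrank_Pim]
    have h1 : n - 1 + 1 = n := by omega
    have h2 : n - 1 + 2 = n + 1 := by omega
    rw [h1, h2, Fintype.card_fin, arith_split]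
  have hsurj : Function.Surjective Phi :=
    (LinearMap.injective_iff_surjective_of_finrank_eq_finrank hfr).mp hinj
  obtain ⟨⟨a, r⟩, har⟩ := hsurj ⟨f, mem_Pim.mpr hf⟩
  refine ⟨a, r, mem_Pim.mp r.2, ?_⟩
  have := congrArg Subtype.val har
  rw [LinearMap.codRestrict_apply, hU] at this
  exact this.symm


omit hW_mom hW_pd hPorth hPdeg hPli hn

lemma exists_sep (z w : ℝ × ℝ) (hzw : w ≠ z) :
    ∃ g : MvPolynomial (Fin 2) ℝ, evp w g = 0 ∧ evp z g = 1 := by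
  by_cases h1 : w.1 ≠ z.1
  · refine ⟨MvPolynomial.C (z.1 - w.1)⁻¹ * (MvPolynomial.X 0 - MvPolynomial.C w.1), ?_, ?_⟩
    · simp [evp]
    · simp [evp]
      rw [inv_mul_cancel₀ (sub_ne_zero.mpr (Ne.symm h1))]
  · have h2 : w.2 ≠ z.2 := by
      intro h2
      exact hzw (Prod.ext (not_not.mp h1) h2)
    refine ⟨MvPolynomial.C (z.2 - w.2)⁻¹ * (MvPolynomial.X 1 - MvPolynomial.C w.2), ?_, ?_⟩
    · simp [evp]
    · simp [evp]
      rw [inv_mul_cancel₀ (sub_ne_zero.mpr (Ne.symm h2))]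

lemma exists_lagrange_any {m : ℕ} (Z : Fin m → ℝ × ℝ) (hinj : Function.Injective Z) (i : Fin m) :
    ∃ g : MvPolynomial (Fin 2) ℝ, evp (Z i) g = 1 ∧ ∀ j, j ≠ i → evp (Z j) g = 0 := by
  classical
  have hchoice : ∀ j : Fin m, j ≠ i → ∃ g : MvPolynomial (Fin 2) ℝ,
      evp (Z j) g = 0 ∧ evp (Z i) g = 1 :=
    fun j hj => exists_sep (Z i) (Z j) (fun h => hj (hinj h))
  choose g hg0 hg1 using hchoice
  set g' : Fin m → MvPolynomial (Fin 2) ℝ := fun j => if h : j ≠ i then g j h else 1 with hg'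
  have evp_prod : ∀ (z : ℝ × ℝ) (s : Finset (Fin m)),
      evp z (∏ j ∈ s, g' j) = ∏ j ∈ s, evp z (g' j) := by
    intro z s
    rw [evp]
    exact map_prod (MvPolynomial.eval ![z.1, z.2]) _ _
  refine ⟨∏ j ∈ Finset.univ.erase i, g' j, ?_, ?_⟩
  · rw [evp_prod]
    apply Finset.prod_eq_one
    intro j hj
    have hji : j ≠ i := Finset.ne_of_mem_erase hj
    rw [hg']
    simp only [dif_pos hji]
    exact hg1 j hji
  · intro j hji
    rw [evp_prod]
    apply Finset.prod_eq_zero (Finset.mem_erase.mpr ⟨hji, Finset.mem_univ j⟩)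
    rw [hg']
    simp only [dif_pos hji]
    exact hg0 j hji


/-- evaluation as a linear map -/
def evpLin (z : ℝ × ℝ) : MvPolynomial (Fin 2) ℝ →ₗ[ℝ] ℝ where
  toFun := evp z
  map_add' := evp_add z
  map_smul' := fun c f => by simp [evp_smul]

section Annih

variable {m : ℕ} (Z : Fin m → ℝ × ℝ)

include hW_mom hW_pd hPorth hPdeg hPli hn

lemma annihA (hZ : ∀ i k, evp (Z i) (P k) = 0) (c : Fin m → ℝ)
    (hc : ∀ q : MvPolynomial (Fin 2) ℝ, q.totalDegree ≤ n - 1 → ∑ i, c i * evp (Z i) q = 0)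
    (q : MvPolynomial (Fin 2) ℝ) (hq : q.totalDegree ≤ n) :
    ∑ i, c i * evp (Z i) q = 0 := by
  obtain ⟨a, r, hr, rfl⟩ := decomp_n Om W hW_mom hW_pd hPorth hPdeg hPli hn q hq
  have he : ∀ i, evp (Z i) ((∑ k, a k • P k) + r) = evp (Z i) r := by
    intro i
    rw [evp_add, evp_sum]
    have : ∀ k, evp (Z i) (a k • P k) = 0 := fun k => by rw [evp_smul, hZ i k, mul_zero]
    rw [Finset.sum_congr rfl fun k _ => this k]
    simp
  rw [Finset.sum_congr rfl fun i _ => by rw [he i]]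
  exact hc r hr

lemma annih (hZ : ∀ i k, evp (Z i) (P k) = 0) (c : Fin m → ℝ)
    (hc : ∀ q : MvPolynomial (Fin 2) ℝ, q.totalDegree ≤ n - 1 → ∑ i, c i * evp (Z i) q = 0)
    (p : MvPolynomial (Fin 2) ℝ) : ∑ i, c i * evp (Z i) p = 0 := by
  induction p using MvPolynomial.induction_on generalizing c with
  | C a => exact hc (MvPolynomial.C a) (by simp)
  | add p q hp hq =>
      simp only [evp_add, mul_add, Finset.sum_add_distrib]
      rw [hp c hc, hq c hc, add_zero]
  | mul_X p j hp =>
      have step : ∑ i, c i * evp (Z i) (p * MvPolynomial.X j)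
          = ∑ i, (c i * evp (Z i) (MvPolynomial.X j)) * evp (Z i) p := by
        refine Finset.sum_congr rfl fun i _ => ?_
        rw [evp_mul]
        ring
      rw [step]
      apply hp
      intro q hq
      have hdeg : (MvPolynomial.X j * q).totalDegree ≤ n := by
        refine le_trans (MvPolynomial.totalDegree_mul _ _) ?_
        have : (MvPolynomial.X (R := ℝ) j).totalDegree = 1 := MvPolynomial.totalDegree_X j
        omega
      have e : ∑ i, (c i * evp (Z i) (MvPolynomial.X j)) * evp (Z i) q
          = ∑ i, c i * evp (Z i) (MvPolynomial.X j * q) := by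
        refine Finset.sum_congr rfl fun i _ => ?_
        rw [evp_mul]
        ring
      rw [e]
      exact annihA Om W hW_mom hW_pd hPorth hPdeg hPli hn Z hZ c hc _ hdeg

lemma eval_indep (hZinj : Function.Injective Z) (hZ : ∀ i k, evp (Z i) (P k) = 0)
    (c : Fin m → ℝ)
    (hc : ∀ q : MvPolynomial (Fin 2) ℝ, q.totalDegree ≤ n - 1 → ∑ i, c i * evp (Z i) q = 0)
    (i : Fin m) : c i = 0 := by
  obtain ⟨g, hg1, hg0⟩ := exists_lagrange_any Z hZinj i
  have := annih Om W hW_mom hW_pd hPorth hPdeg hPli hn Z hZ c hc g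
  rwa [Finset.sum_eq_single i (fun j _ hj => by rw [hg0 j hj, mul_zero])
    (fun h => absurd (Finset.mem_univ i) h), hg1, mul_one] at this

lemma zeros_card_le (hZinj : Function.Injective Z) (hZ : ∀ i k, evp (Z i) (P k) = 0) :
    m ≤ n * (n + 1) / 2 := by
  classical
  set phi : Fin m → Module.Dual ℝ (Pim (n - 1)) :=
    fun i => (evpLin (Z i)).comp (Pim (n - 1)).subtype with hphi
  have hli : LinearIndependent ℝ phi := by
    rw [Fintype.linearIndependent_iff]
    intro c hsum
    apply eval_indep Om W hW_mom hW_pd hPorth hPdeg hPli hn Z hZinj hZ c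
    intro q hq
    have := congrFun (congrArg (fun (F : Module.Dual ℝ (Pim (n-1))) =>
      (F : Pim (n-1) → ℝ)) hsum) ⟨q, mem_Pim.mpr hq⟩
    simpa [hphi, evpLin, evp] using this
  have hcard := hli.fintype_card_le_finrank
  rw [Fintype.card_fin, Subspace.dual_finrank_eq, finrank_Pim] at hcard
  have h1 : n - 1 + 1 = n := by omega
  have h2 : n - 1 + 2 = n + 1 := by omega
  rwa [h1, h2] at hcard

end Annih


/-- the submodule of polynomials of the form `∑ q k * P k + r` with `deg q k, deg r ≤ n-1` -/
def Sdec : Submodule ℝ (MvPolynomial (Fin 2) ℝ) where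
  carrier := {f | ∃ (q : Fin (n + 1) → MvPolynomial (Fin 2) ℝ) (r : MvPolynomial (Fin 2) ℝ),
    (∀ k, (q k).totalDegree ≤ n - 1) ∧ r.totalDegree ≤ n - 1 ∧ f = (∑ k, q k * P k) + r}
  zero_mem' := ⟨0, 0, by simp, by simp, by simp⟩
  add_mem' := by
    rintro f g ⟨q1, r1, hq1, hr1, rfl⟩ ⟨q2, r2, hq2, hr2, rfl⟩
    refine ⟨q1 + q2, r1 + r2, fun k => ?_, ?_, ?_⟩
    · exact le_trans (MvPolynomial.totalDegree_add _ _) (max_le (hq1 k) (hq2 k))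
    · exact le_trans (MvPolynomial.totalDegree_add _ _) (max_le hr1 hr2)
    · simp only [Pi.add_apply, add_mul, Finset.sum_add_distrib]
      abel
  smul_mem' := by
    rintro c f ⟨q, r, hq, hr, rfl⟩
    refine ⟨fun k => c • q k, c • r, fun k => ?_, ?_, ?_⟩
    · exact le_trans (MvPolynomial.totalDegree_smul_le _ _) (hq k)
    · exact le_trans (MvPolynomial.totalDegree_smul_le _ _) hr
    · rw [smul_add, Finset.smul_sum]
      congr 1
      exact Finset.sum_congr rfl fun k _ => (smul_mul_assoc c (q k) (P k)).symm

include hW_mom hW_pd hPorth hPdeg hPli hn in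
lemma deg_le_mem_S (d : ℕ) : ∀ f : MvPolynomial (Fin 2) ℝ, f.totalDegree ≤ d →
    f.totalDegree ≤ 2 * n - 1 → f ∈ Sdec (P := P) := by
  induction d using Nat.strong_induction_on with
  | _ d ih =>
    intro f hfd hf2
    rw [← MvPolynomial.support_sum_monomial_coeff f]
    apply Submodule.sum_mem
    intro s hs
    have hse : (s.sum fun _ e => e) ≤ f.totalDegree := MvPolynomial.le_totalDegree hs
    rw [show MvPolynomial.monomial s (MvPolynomial.coeff s f)
      = MvPolynomial.coeff s f • MvPolynomial.monomial s 1 by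
        rw [MvPolynomial.smul_monomial, smul_eq_mul, mul_one]]
    apply Submodule.smul_mem
    by_cases hcase : (s.sum fun _ e => e) ≤ n - 1
    · exact ⟨0, MvPolynomial.monomial s 1, by simp, by
        rw [MvPolynomial.totalDegree_monomial s one_ne_zero]; exact hcase, by simp⟩
    · have hen : n ≤ s.sum fun _ e => e := by omega
      set a := s 0 with ha
      set b := s 1 with hb
      have hab : a + b = s.sum fun _ e => e := (finsuppSum_eq s).symm
      set a' := min a n with ha'
      set s1 : Fin 2 →₀ ℕ := Finsupp.single 0 a' + Finsupp.single 1 (n - a') with hs1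
      set s2 : Fin 2 →₀ ℕ := Finsupp.single 0 (a - a') + Finsupp.single 1 (b - (n - a'))
        with hs2
      have hs12 : s = s1 + s2 := by
        ext i
        fin_cases i <;>
          simp only [hs1, hs2, Finsupp.add_apply, Finsupp.single_apply] <;> simp <;> omega
      have hmono : MvPolynomial.monomial s (1:ℝ)
          = MvPolynomial.monomial s1 1 * MvPolynomial.monomial s2 1 := by
        rw [MvPolynomial.monomial_mul, one_mul, ← hs12]
      have hd1 : (MvPolynomial.monomial s1 (1:ℝ)).totalDegree ≤ n := by
        rw [MvPolynomial.totalDegree_monomial _ one_ne_zero, finsuppSum_eq]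
        simp only [hs1, Finsupp.add_apply, Finsupp.single_apply]
        simp
        omega
      have hd2 : (MvPolynomial.monomial s2 (1:ℝ)).totalDegree = (s.sum fun _ e => e) - n := by
        rw [MvPolynomial.totalDegree_monomial _ one_ne_zero, finsuppSum_eq]
        simp only [hs2, Finsupp.add_apply, Finsupp.single_apply]
        simp
        omega
      obtain ⟨al, r, hr, hrep⟩ :=
        decomp_n Om W hW_mom hW_pd hPorth hPdeg hPli hn (MvPolynomial.monomial s1 1) hd1
      have key : MvPolynomial.monomial s (1:ℝ)
          = (∑ k, (al k • MvPolynomial.monomial s2 1) * P k)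
            + r * MvPolynomial.monomial s2 1 := by
        rw [hmono, hrep, add_mul, Finset.sum_mul]
        congr 1
        refine Finset.sum_congr rfl fun k _ => ?_
        rw [smul_mul_assoc, smul_mul_assoc, mul_comm (P k)]
      rw [key]
      apply Submodule.add_mem
      · refine ⟨fun k => al k • MvPolynomial.monomial s2 1, 0, fun k => ?_, by simp, by simp⟩
        refine le_trans (MvPolynomial.totalDegree_smul_le _ _) ?_
        rw [hd2]
        omega
      · have hdeg : (r * MvPolynomial.monomial s2 1).totalDegree
            ≤ (s.sum fun _ e => e) - 1 := by
          refine le_trans (MvPolynomial.totalDegree_mul _ _) ?_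
          rw [hd2]
          omega
        exact ih ((s.sum fun _ e => e) - 1) (by omega) _ hdeg (by omega)

include hW_mom hW_pd hPorth hPdeg hPli hn in
lemma decomp_2n (f : MvPolynomial (Fin 2) ℝ) (hf : f.totalDegree ≤ 2 * n - 1) :
    ∃ (q : Fin (n + 1) → MvPolynomial (Fin 2) ℝ) (r : MvPolynomial (Fin 2) ℝ),
      (∀ k, (q k).totalDegree ≤ n - 1) ∧ r.totalDegree ≤ n - 1 ∧
        f = (∑ k, q k * P k) + r :=
  deg_le_mem_S Om W hW_mom hW_pd hPorth hPdeg hPli hn f.totalDegree f le_rfl hf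


/-- evaluation at a tuple of points, as a linear map on `Π_m` -/
def evalMap (m : ℕ) {N : ℕ} (Z : Fin N → ℝ × ℝ) : Pim m →ₗ[ℝ] (Fin N → ℝ) :=
  LinearMap.pi fun i => (evpLin (Z i)).comp (Pim m).subtype

lemma evalMap_apply (m : ℕ) {N : ℕ} (Z : Fin N → ℝ × ℝ) (q : Pim m) (i : Fin N) :
    evalMap m Z q i = evp (Z i) (q : MvPolynomial (Fin 2) ℝ) := rfl

include hn in
lemma evalMap_surj {Z : Fin (n * (n + 1) / 2) → ℝ × ℝ}
    (hinj : Function.Injective (evalMap (n - 1) Z)) :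
    Function.Surjective (evalMap (n - 1) Z) := by
  have hfr : Module.finrank ℝ (Pim (n - 1))
      = Module.finrank ℝ (Fin (n * (n + 1) / 2) → ℝ) := by
    rw [finrank_Pim, Module.finrank_pi, Fintype.card_fin]
    have h1 : n - 1 + 1 = n := by omega
    have h2 : n - 1 + 2 = n + 1 := by omega
    rw [h1, h2]
  exact (LinearMap.injective_iff_surjective_of_finrank_eq_finrank hfr).mp hinj

include hn in
lemma exists_lagr {Z : Fin (n * (n + 1) / 2) → ℝ × ℝ}
    (hinj : Function.Injective (evalMap (n - 1) Z)) :
    ∃ L : Fin (n * (n + 1) / 2) → MvPolynomial (Fin 2) ℝ,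
      (∀ i, (L i).totalDegree ≤ n - 1) ∧
      ∀ i j, evp (Z j) (L i) = if i = j then 1 else 0 := by
  classical
  have hsurj := evalMap_surj hn hinj
  choose Lp hLp using fun i => hsurj (Pi.single i 1)
  refine ⟨fun i => (Lp i : MvPolynomial (Fin 2) ℝ), fun i => mem_Pim.mp (Lp i).2,
    fun i j => ?_⟩
  have h := congrFun (hLp i) j
  rw [evalMap_apply] at h
  rw [h, Pi.single_apply]
  simp [eq_comm]

lemma lagr_repr {N : ℕ} {Z : Fin N → ℝ × ℝ}
    (hinj : Function.Injective (evalMap (n - 1) Z))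
    {L : Fin N → MvPolynomial (Fin 2) ℝ}
    (hLdeg : ∀ i, (L i).totalDegree ≤ n - 1)
    (hLd : ∀ i j, evp (Z j) (L i) = if i = j then 1 else 0)
    (r : MvPolynomial (Fin 2) ℝ) (hr : r.totalDegree ≤ n - 1) :
    r = ∑ i, evp (Z i) r • L i := by
  classical
  have hmem : (∑ i, evp (Z i) r • L i).totalDegree ≤ n - 1 := by
    refine le_trans (MvPolynomial.totalDegree_finset_sum _ _) ?_
    exact Finset.sup_le fun i _ => le_trans (MvPolynomial.totalDegree_smul_le _ _) (hLdeg i)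
  have key : evalMap (n - 1) Z ⟨r, mem_Pim.mpr hr⟩
      = evalMap (n - 1) Z ⟨∑ i, evp (Z i) r • L i, mem_Pim.mpr hmem⟩ := by
    funext j
    rw [evalMap_apply, evalMap_apply]
    rw [evp_sum]
    rw [Finset.sum_congr rfl fun i _ => by rw [evp_smul, hLd i j]]
    rw [Finset.sum_eq_single j (fun i _ hij => by rw [if_neg hij, mul_zero])
      (fun h => absurd (Finset.mem_univ j) h), if_pos rfl, mul_one]
  exact congrArg Subtype.val (hinj key)


include hW_mom hW_pd hPorth hPdeg hPli hn in
lemma fwd (pt : Fin (n * (n + 1) / 2) → ℝ × ℝ) (lam : Fin (n * (n + 1) / 2) → ℝ)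
    (hptinj : Function.Injective pt)
    (hex : ∀ f : MvPolynomial (Fin 2) ℝ, f.totalDegree ≤ 2 * n - 1 →
      ∫ z in Om, MvPolynomial.eval ![z.1, z.2] f * W z =
        ∑ k, lam k * MvPolynomial.eval ![(pt k).1, (pt k).2] f) :
    Set.range pt = {z : ℝ × ℝ | ∀ k, MvPolynomial.eval ![z.1, z.2] (P k) = 0} := by
  classical
  have hex' : ∀ f : MvPolynomial (Fin 2) ℝ, f.totalDegree ≤ 2 * n - 1 →
      ∫ z in Om, evp z f * W z = ∑ k, lam k * evp (pt k) f := hex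
  -- Step 1 : the evaluation map at the nodes is injective on Π_{n-1}
  have hEvInj : Function.Injective (evalMap (n - 1) pt) := by
    rw [← LinearMap.ker_eq_bot, Submodule.eq_bot_iff]
    intro q hq
    rw [LinearMap.mem_ker] at hq
    have hz : ∀ i, evp (pt i) (q : MvPolynomial (Fin 2) ℝ) = 0 := by
      intro i
      have := congrFun hq i
      rwa [evalMap_apply] at this
    by_contra hne
    have hqv : (q : MvPolynomial (Fin 2) ℝ) ≠ 0 := by
      intro h
      exact hne (Subtype.ext h)
    have hpos := hW_pd _ hqv
    set qv := (q : MvPolynomial (Fin 2) ℝ)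
    have hdq : (qv * qv).totalDegree ≤ 2 * n - 1 := by
      refine le_trans (MvPolynomial.totalDegree_mul _ _) ?_
      have hqd2 : qv.totalDegree ≤ n - 1 := mem_Pim.mp q.2
      omega
    have h0 := hex' (qv * qv) hdq
    rw [show (fun z => evp z (qv * qv) * W z)
      = fun z => (MvPolynomial.eval ![z.1, z.2] qv) ^ 2 * W z from
      funext fun z => by simp [evp, sq]] at h0
    rw [Finset.sum_congr rfl fun i _ => by rw [evp_mul, hz i, mul_zero, mul_zero]] at h0
    rw [Finset.sum_const, smul_zero] at h0
    rw [h0] at hpos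
    exact lt_irrefl 0 hpos
  -- Step 2 : Lagrange polynomials
  obtain ⟨L, hLdeg, hLd⟩ := exists_lagr hn hEvInj
  -- Step 3 : positive weights
  have hlam : ∀ i, 0 < lam i := by
    intro i
    have hLne : L i ≠ 0 := by
      intro h
      have := hLd i i
      rw [h, if_pos rfl] at this
      simp [evp] at this
    have hpos := hW_pd _ hLne
    have hdq : (L i * L i).totalDegree ≤ 2 * n - 1 := by
      refine le_trans (MvPolynomial.totalDegree_mul _ _) ?_
      have := hLdeg i
      omega
    have h0 := hex' (L i * L i) hdq
    rw [show (fun z => evp z (L i * L i) * W z)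
      = fun z => (MvPolynomial.eval ![z.1, z.2] (L i)) ^ 2 * W z from
      funext fun z => by simp [evp, sq]] at h0
    rw [Finset.sum_congr rfl fun j _ => by rw [evp_mul, hLd i j]] at h0
    rw [Finset.sum_eq_single i (fun j _ hj => by rw [if_neg (Ne.symm hj), mul_zero, mul_zero])
      (fun h => absurd (Finset.mem_univ i) h), if_pos rfl, mul_one, mul_one] at h0
    rw [← h0]
    exact hpos
  -- Step 4 : the nodes are common zeros
  have hzero : ∀ i k, evp (pt i) (P k) = 0 := by
    intro i k
    set q := ∑ j, evp (pt j) (P k) • L j with hq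
    have hqd : q.totalDegree ≤ n - 1 := by
      refine le_trans (MvPolynomial.totalDegree_finset_sum _ _) ?_
      exact Finset.sup_le fun j _ =>
        le_trans (MvPolynomial.totalDegree_smul_le _ _) (hLdeg j)
    have hqev : ∀ j, evp (pt j) q = evp (pt j) (P k) := by
      intro j
      rw [hq, evp_sum]
      rw [Finset.sum_congr rfl fun l _ => by rw [evp_smul, hLd l j]]
      rw [Finset.sum_eq_single j (fun l _ hl => by rw [if_neg hl, mul_zero])
        (fun h => absurd (Finset.mem_univ j) h), if_pos rfl, mul_one]
    have horth := hPorth k q (by omega)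
    have hdq : (P k * q).totalDegree ≤ 2 * n - 1 := by
      refine le_trans (MvPolynomial.totalDegree_mul _ _) ?_
      rw [hPdeg k]
      omega
    have h0 := hex' (P k * q) hdq
    rw [show (fun z => evp z (P k * q) * W z) = fun z =>
      MvPolynomial.eval ![z.1, z.2] (P k) * MvPolynomial.eval ![z.1, z.2] q * W z from
      funext fun z => by simp [evp]] at h0
    rw [horth] at h0
    rw [Finset.sum_congr rfl fun j _ => by rw [evp_mul, hqev j]] at h0
    have hterm : ∀ j ∈ Finset.univ, (0:ℝ) ≤ lam j * (evp (pt j) (P k) * evp (pt j) (P k)) :=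
      fun j _ => mul_nonneg (le_of_lt (hlam j)) (mul_self_nonneg _)
    have := (Finset.sum_eq_zero_iff_of_nonneg hterm).mp h0.symm i (Finset.mem_univ i)
    have h2 := mul_eq_zero.mp this
    rcases h2 with h2 | h2
    · exact absurd h2 (ne_of_gt (hlam i))
    · exact mul_self_eq_zero.mp h2
  -- Step 5 : conclude
  apply Set.eq_of_subset_of_subset
  · rintro z ⟨i, rfl⟩
    exact fun k => hzero i k
  · intro w hw
    by_contra hnot
    set Zext : Fin (n * (n + 1) / 2 + 1) → ℝ × ℝ := Fin.snoc pt w with hZext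
    have hZinj : Function.Injective Zext := by
      intro i j hij
      rcases Fin.eq_castSucc_or_eq_last i with ⟨i', rfl⟩ | rfl <;>
        rcases Fin.eq_castSucc_or_eq_last j with ⟨j', rfl⟩ | rfl
      · rw [hZext, Fin.snoc_castSucc, Fin.snoc_castSucc] at hij
        exact congrArg Fin.castSucc (hptinj hij)
      · rw [hZext, Fin.snoc_castSucc, Fin.snoc_last] at hij
        exact absurd ⟨i', hij⟩ hnot
      · rw [hZext, Fin.snoc_last, Fin.snoc_castSucc] at hij
        exact absurd ⟨j', hij.symm⟩ hnot
      · rfl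
    have hZzero : ∀ i k, evp (Zext i) (P k) = 0 := by
      intro i k
      rcases Fin.eq_castSucc_or_eq_last i with ⟨i', rfl⟩ | rfl
      · rw [hZext, Fin.snoc_castSucc]
        exact hzero i' k
      · rw [hZext, Fin.snoc_last]
        exact hw k
    have := zeros_card_le Om W hW_mom hW_pd hPorth hPdeg hPli hn Zext hZinj hZzero
    omega


include hW_mom hW_pd hPorth hPdeg hPli hn in
lemma bwd (hcard : ({z : ℝ × ℝ | ∀ k, MvPolynomial.eval ![z.1, z.2] (P k) = 0}).ncard
      = n * (n + 1) / 2) :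
    ∃ (pt : Fin (n * (n + 1) / 2) → ℝ × ℝ) (lam : Fin (n * (n + 1) / 2) → ℝ),
      Function.Injective pt ∧
      ∀ f : MvPolynomial (Fin 2) ℝ, f.totalDegree ≤ 2 * n - 1 →
        ∫ z in Om, MvPolynomial.eval ![z.1, z.2] f * W z =
          ∑ k, lam k * MvPolynomial.eval ![(pt k).1, (pt k).2] f := by
  classical
  set Zset := {z : ℝ × ℝ | ∀ k, MvPolynomial.eval ![z.1, z.2] (P k) = 0} with hZset
  have hNpos : 0 < n * (n + 1) / 2 := by
    obtain ⟨k, hk⟩ := Nat.even_mul_succ_self n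
    have h2 : n + 1 ≤ n * (n + 1) := Nat.le_mul_of_pos_left _ (by omega)
    omega
  have hfin : Zset.Finite := by
    by_contra hinf
    rw [Set.Infinite.ncard hinf] at hcard
    omega
  have htf : hfin.toFinset.card = n * (n + 1) / 2 := by
    rw [← Set.ncard_eq_toFinset_card Zset hfin]
    exact hcard
  set e := Finset.equivFinOfCardEq htf with he
  set pt : Fin (n * (n + 1) / 2) → ℝ × ℝ := fun i => ((e.symm i : hfin.toFinset) : ℝ × ℝ)
    with hpt
  have hptinj : Function.Injective pt := fun i j h =>
    e.symm.injective (Subtype.ext h)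
  have hzero : ∀ i k, evp (pt i) (P k) = 0 := by
    intro i k
    have hmem : (pt i) ∈ Zset := by
      rw [← Set.Finite.mem_toFinset hfin]
      exact (e.symm i).2
    exact hmem k
  -- surjectivity of the evaluation map via linear independence of point evaluations
  have hEvSurj : Function.Surjective (evalMap (n - 1) pt) := by
    rw [← LinearMap.dualMap_injective_iff]
    rw [← LinearMap.ker_eq_bot, Submodule.eq_bot_iff]
    intro phi hphi
    rw [LinearMap.mem_ker] at hphi
    set c : Fin (n * (n + 1) / 2) → ℝ :=
      fun i => phi (fun j => if i = j then 1 else 0) with hc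
    have hv : ∀ v : Fin (n * (n + 1) / 2) → ℝ, phi v = ∑ i, v i * c i :=
      fun v => (phi.pi_apply_eq_sum_univ v).trans rfl
    have hcz : ∀ q : MvPolynomial (Fin 2) ℝ, q.totalDegree ≤ n - 1 →
        ∑ i, c i * evp (pt i) q = 0 := by
      intro q hq
      have h := congrFun (congrArg (fun (F : Module.Dual ℝ (Pim (n-1))) =>
        (F : Pim (n-1) → ℝ)) hphi) ⟨q, mem_Pim.mpr hq⟩
      have h2 : phi (evalMap (n - 1) pt ⟨q, mem_Pim.mpr hq⟩) = 0 := h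
      rw [hv] at h2
      rw [← h2]
      refine Finset.sum_congr rfl fun i _ => ?_
      rw [evalMap_apply, mul_comm]
    have hc0 := eval_indep Om W hW_mom hW_pd hPorth hPdeg hPli hn pt hptinj hzero c hcz
    apply LinearMap.ext
    intro v
    rw [hv]
    simp [hc0]
  have hEvInj : Function.Injective (evalMap (n - 1) pt) := by
    have hfr : Module.finrank ℝ (Pim (n - 1))
        = Module.finrank ℝ (Fin (n * (n + 1) / 2) → ℝ) := by
      rw [finrank_Pim, Module.finrank_pi, Fintype.card_fin]
      have h1 : n - 1 + 1 = n := by omega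
      have h2 : n - 1 + 2 = n + 1 := by omega
      rw [h1, h2]
    exact (LinearMap.injective_iff_surjective_of_finrank_eq_finrank hfr).mpr hEvSurj
  obtain ⟨L, hLdeg, hLd⟩ := exists_lagr hn hEvInj
  refine ⟨pt, fun i => intW Om W (L i), hptinj, ?_⟩
  intro f hf
  obtain ⟨q, r, hq, hr, rfl⟩ := decomp_2n Om W hW_mom hW_pd hPorth hPdeg hPli hn f hf
  -- left-hand side
  have hLHS : ∫ z in Om, MvPolynomial.eval ![z.1, z.2] ((∑ k, q k * P k) + r) * W z
      = ∑ i, evp (pt i) r * intW Om W (L i) := by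
    have e1 : ∫ z in Om, MvPolynomial.eval ![z.1, z.2] ((∑ k, q k * P k) + r) * W z
        = intW Om W ((∑ k, q k * P k) + r) := rfl
    rw [e1, intW_add Om W hW_mom, intW_sum Om W hW_mom]
    have e2 : ∀ k, intW Om W (q k * P k) = 0 := by
      intro k
      rw [intW, show (fun z => evp z (q k * P k) * W z) = fun z =>
        MvPolynomial.eval ![z.1, z.2] (P k) * MvPolynomial.eval ![z.1, z.2] (q k) * W z from
        funext fun z => by
          rw [evp_mul]
          show evp z (q k) * evp z (P k) * W z = evp z (P k) * evp z (q k) * W z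
          ring]
      exact hPorth k (q k) (by have := hq k; omega)
    rw [Finset.sum_congr rfl fun k _ => e2 k, Finset.sum_const, smul_zero, zero_add]
    conv_lhs => rw [lagr_repr hEvInj hLdeg hLd r hr]
    rw [intW_sum Om W hW_mom]
    exact Finset.sum_congr rfl fun i _ => intW_smul Om W _ _
  rw [hLHS]
  -- right-hand side
  refine Finset.sum_congr rfl fun i _ => ?_
  have e3 : MvPolynomial.eval ![(pt i).1, (pt i).2] ((∑ k, q k * P k) + r)
      = evp (pt i) r := by
    have : evp (pt i) ((∑ k, q k * P k) + r) = evp (pt i) r := by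
      rw [evp_add, evp_sum]
      rw [Finset.sum_congr rfl fun k _ => by rw [evp_mul, hzero i k, mul_zero]]
      rw [Finset.sum_const, smul_zero, zero_add]
    exact this
  rw [e3, mul_comm]

end AuxGC

/-- Characterization of Gaussian cubature rules: a Gaussian cubature rule of degree
`2n-1` with `N = n(n+1)/2 = dim Π²_{n-1}` nodes exists if and only if the basis
`P_{0,n}, …, P_{n,n}` of `𝒱_n²` has `N` common zeros, in which case the nodes are
exactly these common zeros. -/
theorem stmt16 (Ω : Set (ℝ × ℝ)) (W : ℝ × ℝ → ℝ)
    (hW_nn : ∀ z ∈ Ω, 0 ≤ W z)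
    (hW_mom : ∀ f : MvPolynomial (Fin 2) ℝ,
      IntegrableOn (fun z => MvPolynomial.eval ![z.1, z.2] f * W z) Ω)
    (hW_pd : ∀ f : MvPolynomial (Fin 2) ℝ, f ≠ 0 →
      0 < ∫ z in Ω, (MvPolynomial.eval ![z.1, z.2] f) ^ 2 * W z)
    (n : ℕ) (hn : 1 ≤ n)
    (P : Fin (n + 1) → MvPolynomial (Fin 2) ℝ)
    (hPdeg : ∀ k, (P k).totalDegree = n)
    (hPorth : ∀ k (q : MvPolynomial (Fin 2) ℝ), q.totalDegree < n →
      ∫ z in Ω, MvPolynomial.eval ![z.1, z.2] (P k) *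
        MvPolynomial.eval ![z.1, z.2] q * W z = 0)
    (hPli : LinearIndependent ℝ P) :
    ((∃ (pt : Fin (n * (n + 1) / 2) → ℝ × ℝ) (lam : Fin (n * (n + 1) / 2) → ℝ),
        Function.Injective pt ∧
        ∀ f : MvPolynomial (Fin 2) ℝ, f.totalDegree ≤ 2 * n - 1 →
          ∫ z in Ω, MvPolynomial.eval ![z.1, z.2] f * W z =
            ∑ k, lam k * MvPolynomial.eval ![(pt k).1, (pt k).2] f) ↔
      ({z : ℝ × ℝ | ∀ k, MvPolynomial.eval ![z.1, z.2] (P k) = 0}).ncard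
        = n * (n + 1) / 2) ∧
    (∀ (pt : Fin (n * (n + 1) / 2) → ℝ × ℝ) (lam : Fin (n * (n + 1) / 2) → ℝ),
      Function.Injective pt →
      (∀ f : MvPolynomial (Fin 2) ℝ, f.totalDegree ≤ 2 * n - 1 →
        ∫ z in Ω, MvPolynomial.eval ![z.1, z.2] f * W z =
          ∑ k, lam k * MvPolynomial.eval ![(pt k).1, (pt k).2] f) →
      Set.range pt = {z : ℝ × ℝ | ∀ k, MvPolynomial.eval ![z.1, z.2] (P k) = 0}) := by
  constructor
  · constructor
    · rintro ⟨pt, lam, hinj, hex⟩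
      rw [← fwd Ω W hW_mom hW_pd hPorth hPdeg hPli hn pt lam hinj hex]
      rw [← Set.image_univ, Set.ncard_image_of_injective _ hinj, Set.ncard_univ,
        Nat.card_eq_fintype_card, Fintype.card_fin]
    · intro hcard
      exact bwd Ω W hW_mom hW_pd hPorth hPdeg hPli hn hcard
  · intro pt lam hinj hex
    exact fwd Ω W hW_mom hW_pd hPorth hPdeg hPli hn pt lam hinj hex
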